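/- For two completely positive maps Φ, Ψ with Choi matrices Φ_μ, Ψ_μ and any density matrix ρ, the conditional fidelity Tr√(Φ_μ(ρ)^{1/2} Ψ_μ(ρ) Φ_μ(ρ)^{1/2}) equals Tr|Φ_μ^{1/2} (ρ̃ ⊗ I) Ψ_μ^{1/2}|, where Φ_μ(ρ) = (ρ̃^{1/2} ⊗ I) Φ_μ (ρ̃^{1/2} ⊗ I). -/

import Mathlib

open Matrix Kronecker
open scoped ComplexOrder

open scoped Classical in
/-- Positive semidefinite square root (zero if the matrix is not PSD). -/
noncomputable def psqrt {n : Type*} [Fintype n] [DecidableEq n] (A : Matrix n n ℂ) : Matrix n n ℂ :=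
  if h : A.PosSemidef then
    h.1.eigenvectorUnitary.1 * diagonal ((↑) ∘ (Real.sqrt ∘ h.1.eigenvalues)) *
      (star h.1.eigenvectorUnitary : Matrix n n ℂ)
  else 0

/-- Matrix absolute value `|A| = √(Aᴴ A)`. -/
noncomputable def matAbs {n : Type*} [Fintype n] [DecidableEq n] (A : Matrix n n ℂ) : Matrix n n ℂ :=
  psqrt (Aᴴ * A)

/-- Positive semidefinite square root of a PSD matrix (the old Mathlib definition). -/
noncomputable def Matrix.PosSemidef.sqrt {n : Type*} [Fintype n] [DecidableEq n] {A : Matrix n n ℂ}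
    (hA : A.PosSemidef) : Matrix n n ℂ :=
  hA.1.eigenvectorUnitary.1 * diagonal ((↑) ∘ (Real.sqrt ∘ hA.1.eigenvalues)) *
    (star hA.1.eigenvectorUnitary : Matrix n n ℂ)

lemma spec_eq {ι : Type*} [Fintype ι] [DecidableEq ι] {A : Matrix ι ι ℂ} (hA : A.IsHermitian) :
    A = (hA.eigenvectorUnitary : Matrix ι ι ℂ) * diagonal (RCLike.ofReal ∘ hA.eigenvalues) *
      star (hA.eigenvectorUnitary : Matrix ι ι ℂ) := by
  conv_lhs => rw [hA.spectral_theorem]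
  rw [Unitary.conjStarAlgAut_apply]

lemma Matrix.PosSemidef.posSemidef_sqrt {n : Type*} [Fintype n] [DecidableEq n]
    {A : Matrix n n ℂ} (hA : A.PosSemidef) : hA.sqrt.PosSemidef := by
  have hD : (diagonal ((↑) ∘ (Real.sqrt ∘ hA.1.eigenvalues)) : Matrix n n ℂ).PosSemidef :=
    Matrix.PosSemidef.diagonal (fun i => Complex.zero_le_real.mpr (Real.sqrt_nonneg _))
  have := hD.mul_mul_conjTranspose_same (hA.1.eigenvectorUnitary : Matrix n n ℂ)
  rw [← Matrix.star_eq_conjTranspose] at this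
  exact this

lemma Matrix.PosSemidef.sqrt_mul_self {n : Type*} [Fintype n] [DecidableEq n]
    {A : Matrix n n ℂ} (hA : A.PosSemidef) : hA.sqrt * hA.sqrt = A := by
  set U : Matrix n n ℂ := (hA.1.eigenvectorUnitary : Matrix n n ℂ) with hU
  set D : Matrix n n ℂ := diagonal ((↑) ∘ (Real.sqrt ∘ hA.1.eigenvalues)) with hDdef
  have h2 : star U * U = 1 := Unitary.coe_star_mul_self _
  have hD : D * D = diagonal (RCLike.ofReal ∘ hA.1.eigenvalues) := by
    rw [hDdef, diagonal_mul_diagonal]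
    congr 1
    ext i
    simp only [Function.comp_apply]
    rw [← Complex.ofReal_mul, Real.mul_self_sqrt (hA.eigenvalues_nonneg i)]
    rfl
  have hsq : hA.sqrt = U * D * star U := rfl
  rw [hsq]
  conv_rhs => rw [spec_eq hA.1]
  calc U * D * star U * (U * D * star U) = U * (D * (star U * U) * D) * star U := by
        simp only [Matrix.mul_assoc]
    _ = _ := by rw [h2, Matrix.mul_one, hD]

lemma psqrt_eq {n : Type*} [Fintype n] [DecidableEq n] {A : Matrix n n ℂ}
    (h : A.PosSemidef) : psqrt A = h.sqrt := dif_pos h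

section aux

open Polynomial

variable {ι : Type*} [Fintype ι] [DecidableEq ι]

lemma charpoly_similar (E F M : Matrix ι ι ℂ) (hEF : E * F = 1) :
    (E * M * F).charpoly = M.charpoly := by
  have hsc : (C : ℂ →+* ℂ[X]).mapMatrix E * Matrix.scalar ι (X : ℂ[X]) *
      (C : ℂ →+* ℂ[X]).mapMatrix F = Matrix.scalar ι (X : ℂ[X]) := by
    calc (C : ℂ →+* ℂ[X]).mapMatrix E * Matrix.scalar ι (X : ℂ[X]) *
        (C : ℂ →+* ℂ[X]).mapMatrix F
        = Matrix.scalar ι (X : ℂ[X]) * ((C : ℂ →+* ℂ[X]).mapMatrix E *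
          (C : ℂ →+* ℂ[X]).mapMatrix F) := by
          rw [← (Matrix.scalar_commute (X : ℂ[X]) (fun r' => Commute.all _ _)
            ((C : ℂ →+* ℂ[X]).mapMatrix E)).eq, Matrix.mul_assoc]
      _ = Matrix.scalar ι (X : ℂ[X]) := by
          rw [← _root_.map_mul, hEF, _root_.map_one, Matrix.mul_one]
  have key : charmatrix (E * M * F) =
      (C : ℂ →+* ℂ[X]).mapMatrix E * charmatrix M * (C : ℂ →+* ℂ[X]).mapMatrix F := by
    simp only [charmatrix]
    rw [Matrix.mul_sub, Matrix.sub_mul, hsc, ← _root_.map_mul, ← _root_.map_mul]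
  have hdet : ((C : ℂ →+* ℂ[X]).mapMatrix E).det * ((C : ℂ →+* ℂ[X]).mapMatrix F).det = 1 := by
    rw [← Matrix.det_mul, ← _root_.map_mul, hEF, _root_.map_one, Matrix.det_one]
  unfold Matrix.charpoly
  rw [key, Matrix.det_mul, Matrix.det_mul]
  calc ((C : ℂ →+* ℂ[X]).mapMatrix E).det * (charmatrix M).det * ((C : ℂ →+* ℂ[X]).mapMatrix F).det
      = (charmatrix M).det * (((C : ℂ →+* ℂ[X]).mapMatrix E).det *
        ((C : ℂ →+* ℂ[X]).mapMatrix F).det) := by ring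
    _ = (charmatrix M).det := by rw [hdet, mul_one]

lemma charpoly_mul_comm' (A B : Matrix ι ι ℂ) : (A * B).charpoly = (B * A).charpoly := by
  let E : Matrix (ι ⊕ ι) (ι ⊕ ι) ℂ := fromBlocks 1 A 0 1
  let F : Matrix (ι ⊕ ι) (ι ⊕ ι) ℂ := fromBlocks 1 (-A) 0 1
  have hEF : E * F = 1 := by
    simp only [E, F, Matrix.fromBlocks_multiply]
    simp [Matrix.fromBlocks_one]
  have hconj : E * (fromBlocks 0 0 B (B * A)) * F = fromBlocks (A * B) 0 B 0 := by
    simp only [E, F, Matrix.fromBlocks_multiply]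
    simp [Matrix.mul_assoc]
  have h := charpoly_similar E F (fromBlocks 0 0 B (B * A)) hEF
  rw [hconj] at h
  rw [Matrix.charpoly_fromBlocks_zero₁₂, Matrix.charpoly_fromBlocks_zero₁₂] at h
  have h0 : (0 : Matrix ι ι ℂ).charpoly ≠ 0 := (Matrix.charpoly_monic _).ne_zero
  have h' : (0 : Matrix ι ι ℂ).charpoly * (A * B).charpoly =
      (0 : Matrix ι ι ℂ).charpoly * (B * A).charpoly := by
    rw [mul_comm] at h
    rw [h]
  exact mul_left_cancel₀ h0 h'

lemma charpoly_diagonal_roots (d : ι → ℂ) :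
    (Matrix.diagonal d).charpoly.roots = Finset.univ.val.map d := by
  have hcm : charmatrix (Matrix.diagonal d) = Matrix.diagonal (fun i => X - C (d i)) := by
    ext i j
    rw [charmatrix_apply]
    by_cases h : i = j
    · subst h; simp
    · simp [Matrix.diagonal_apply_ne _ h]
  have hcp : (Matrix.diagonal d).charpoly =
      ((Finset.univ.val.map d).map fun a => X - C a).prod := by
    rw [Matrix.charpoly, hcm, Matrix.det_diagonal, Multiset.map_map]
    rfl
  rw [hcp, Polynomial.roots_multiset_prod_X_sub_C]

lemma trace_sqrt_eq_roots {A : Matrix ι ι ℂ} (hA : A.PosSemidef) :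
    hA.sqrt.trace = (A.charpoly.roots.map fun z => ((Real.sqrt z.re : ℝ) : ℂ)).sum := by
  set V : Matrix ι ι ℂ := (hA.1.eigenvectorUnitary : Matrix ι ι ℂ) with hV
  have h1 : V * star V = 1 := Unitary.coe_mul_star_self _
  have h2 : star V * V = 1 := Unitary.coe_star_mul_self _
  have hroots : A.charpoly.roots =
      Finset.univ.val.map (fun i => ((hA.1.eigenvalues i : ℝ) : ℂ)) := by
    have hsim := charpoly_similar V (star V)
      (Matrix.diagonal (RCLike.ofReal ∘ hA.1.eigenvalues)) h1
    rw [← spec_eq hA.1] at hsim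
    rw [hsim, charpoly_diagonal_roots]
    rfl
  have htr : hA.sqrt.trace =
      ∑ i, ((Real.sqrt (hA.1.eigenvalues i) : ℝ) : ℂ) := by
    rw [Matrix.PosSemidef.sqrt, Matrix.trace_mul_comm, ← Matrix.mul_assoc]
    rw [show (star hA.1.eigenvectorUnitary : Matrix ι ι ℂ) * hA.1.eigenvectorUnitary.1 = 1 from h2]
    rw [Matrix.one_mul, Matrix.trace_diagonal]
    rfl
  rw [htr, hroots, Multiset.map_map]
  rw [Finset.sum]
  congr 1

lemma trace_psqrt_mul_comm (Y : Matrix ι ι ℂ) :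
    (psqrt (Yᴴ * Y)).trace = (psqrt (Y * Yᴴ)).trace := by
  rw [psqrt_eq (Matrix.posSemidef_conjTranspose_mul_self Y),
    psqrt_eq (Matrix.posSemidef_self_mul_conjTranspose Y),
    trace_sqrt_eq_roots, trace_sqrt_eq_roots, _root_.charpoly_mul_comm']

end aux

theorem conditional_fidelity_eq {m n : Type*} [Fintype m] [DecidableEq m]
    [Fintype n] [DecidableEq n]
    (Φμ Ψμ : Matrix (n × m) (n × m) ℂ) (hΦ : Φμ.PosSemidef) (hΨ : Ψμ.PosSemidef)
    (ρ : Matrix n n ℂ) (hρ : ρ.PosSemidef) (hρ1 : ρ.trace = 1) :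
    (psqrt (psqrt ((psqrt ρᵀ ⊗ₖ (1 : Matrix m m ℂ)) * Φμ * (psqrt ρᵀ ⊗ₖ (1 : Matrix m m ℂ))) *
        ((psqrt ρᵀ ⊗ₖ (1 : Matrix m m ℂ)) * Ψμ * (psqrt ρᵀ ⊗ₖ (1 : Matrix m m ℂ))) *
        psqrt ((psqrt ρᵀ ⊗ₖ (1 : Matrix m m ℂ)) * Φμ * (psqrt ρᵀ ⊗ₖ (1 : Matrix m m ℂ))))).trace =
      (matAbs (psqrt Φμ * (ρᵀ ⊗ₖ (1 : Matrix m m ℂ)) * psqrt Ψμ)).trace := by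
  have hρt : ρᵀ.PosSemidef := hρ.transpose
  have hkronCT : ∀ (A : Matrix n n ℂ) (B : Matrix m m ℂ), (A ⊗ₖ B)ᴴ = Aᴴ ⊗ₖ Bᴴ := by
    intro A B
    ext ⟨i, j⟩ ⟨k, l⟩
    simp [Matrix.conjTranspose_apply, star_mul', mul_comm]
  set X : Matrix (n × m) (n × m) ℂ := psqrt ρᵀ ⊗ₖ (1 : Matrix m m ℂ) with hXdef
  have hXh : Xᴴ = X := by
    rw [hXdef, hkronCT, Matrix.conjTranspose_one, psqrt_eq hρt, hρt.posSemidef_sqrt.1]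
  have hX2 : X * X = ρᵀ ⊗ₖ (1 : Matrix m m ℂ) := by
    rw [hXdef, ← Matrix.mul_kronecker_mul, one_mul, psqrt_eq hρt, hρt.sqrt_mul_self]
  set N : Matrix (n × m) (n × m) ℂ := psqrt Φμ * X with hNdef
  set M : Matrix (n × m) (n × m) ℂ := psqrt Ψμ * X with hMdef
  have hΦh : (psqrt Φμ)ᴴ = psqrt Φμ := by rw [psqrt_eq hΦ]; exact hΦ.posSemidef_sqrt.1
  have hΨh : (psqrt Ψμ)ᴴ = psqrt Ψμ := by rw [psqrt_eq hΨ]; exact hΨ.posSemidef_sqrt.1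
  have hΦ2 : psqrt Φμ * psqrt Φμ = Φμ := by rw [psqrt_eq hΦ]; exact hΦ.sqrt_mul_self
  have hΨ2 : psqrt Ψμ * psqrt Ψμ = Ψμ := by rw [psqrt_eq hΨ]; exact hΨ.sqrt_mul_self
  have hNh : Nᴴ = X * psqrt Φμ := by rw [hNdef, Matrix.conjTranspose_mul, hXh, hΦh]
  have hMh : Mᴴ = X * psqrt Ψμ := by rw [hMdef, Matrix.conjTranspose_mul, hXh, hΨh]
  have hP : X * Φμ * X = Nᴴ * N := by
    rw [hNh, hNdef]
    conv_lhs => rw [← hΦ2]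
    noncomm_ring
  have hQ : X * Ψμ * X = Mᴴ * M := by
    rw [hMh, hMdef]
    conv_lhs => rw [← hΨ2]
    noncomm_ring
  have hPsd : (X * Φμ * X).PosSemidef := by
    rw [hP]; exact Matrix.posSemidef_conjTranspose_mul_self N
  have hSdef : psqrt (X * Φμ * X) = hPsd.sqrt := psqrt_eq hPsd
  set S : Matrix (n × m) (n × m) ℂ := hPsd.sqrt with hS
  have hSh : Sᴴ = S := hPsd.posSemidef_sqrt.1
  have hS2 : S * S = X * Φμ * X := hPsd.sqrt_mul_self
  have hMSh : (M * S)ᴴ = S * Mᴴ := by rw [Matrix.conjTranspose_mul, hSh]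
  have hinner : S * (X * Ψμ * X) * S = (M * S)ᴴ * (M * S) := by
    rw [hMSh, hQ]
    noncomm_ring
  set K : Matrix (n × m) (n × m) ℂ := psqrt Φμ * (ρᵀ ⊗ₖ (1 : Matrix m m ℂ)) * psqrt Ψμ with hKdef
  have hKalt : K = psqrt Φμ * (X * X) * psqrt Ψμ := by rw [hKdef, hX2]
  have hKh : Kᴴ = psqrt Ψμ * (X * X) * psqrt Φμ := by
    rw [hKalt, Matrix.conjTranspose_mul, Matrix.conjTranspose_mul, Matrix.conjTranspose_mul,
      hΦh, hΨh, hXh]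
    noncomm_ring
  have hMS : M * S * (M * S)ᴴ = M * (X * Φμ * X) * Mᴴ := by
    rw [hMSh, ← hS2]
    noncomm_ring
  have houter : (M * S) * (M * S)ᴴ = Kᴴ * K := by
    rw [hMS, hKh, hKalt, hMh, hMdef]
    conv_lhs => rw [← hΦ2]
    noncomm_ring
  rw [hSdef]
  calc (psqrt (S * (X * Ψμ * X) * S)).trace
      = (psqrt ((M * S)ᴴ * (M * S))).trace := by rw [hinner]
    _ = (psqrt ((M * S) * (M * S)ᴴ)).trace := trace_psqrt_mul_comm _
    _ = (psqrt (Kᴴ * K)).trace := by rw [houter]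
    _ = (matAbs K).trace := by rw [matAbs]
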